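/- In a vertex operator algebra V, for homogeneous v ∈ V of weight wt(v) ∈ ℤ and any k ∈ ℤ, the identity Σ_{j≥0} C(k + wt(v) - 1, j) v(j) = Σ_{m≥0} (k^m/m!) v[m] holds as operators on V, where v[m] are the square bracket modes defined by Y[v,z] = Y(e^{z L(0)} v, e^z - 1) = Σ_{n∈ℤ} v[n] z^{-n-1}. -/

import Mathlib

/-- The binomial coefficient `C(x,j)` for `x ∈ ℤ`, `j ∈ ℕ`, as a complex number. -/
noncomputable def cchoose (m : ℤ) (j : ℕ) : ℂ :=
  (∏ i ∈ Finset.range j, ((m : ℂ) - i)) / (Nat.factorial j)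

/-- The power series of `e^{cz}`. -/
noncomputable def expPS (c : ℂ) : PowerSeries ℂ :=
  PowerSeries.mk fun n => c ^ n / (Nat.factorial n)

/-- The power series of `z/(e^z - 1) = ∑ B_n z^n/n!`. -/
noncomputable def bernPS : PowerSeries ℂ :=
  PowerSeries.mk fun n => ((bernoulli n : ℚ) : ℂ) / (Nat.factorial n)

/-- `sqCoeff c j n` is the coefficient of `z^{-n-1}` in the Laurent expansion of
`e^{zc}(e^z-1)^{-j-1}`, i.e. the coefficient of `z^{j-n}` in `e^{zc}(z/(e^z-1))^{j+1}`.
For `v` homogeneous of weight `h`, the square bracket modes of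
`Y[v,z] = Y(e^{zL(0)}v, e^z-1) = ∑_n v[n]z^{-n-1}` are `v[n] = ∑_j sqCoeff h j n · v(j)`. -/
noncomputable def sqCoeff (c : ℂ) (j : ℕ) (n : ℤ) : ℂ :=
  if 0 ≤ (j : ℤ) - n then
    PowerSeries.coeff ((j : ℤ) - n).toNat (expPS c * bernPS ^ (j + 1))
  else 0

open PowerSeries

lemma cchoose_zero' (m : ℤ) : cchoose m 0 = 1 := by simp [cchoose]

lemma cchoose_zero_succ (j : ℕ) : cchoose 0 (j + 1) = 0 := by
  rw [cchoose,
    Finset.prod_eq_zero (Finset.mem_range.mpr (Nat.succ_pos j)) (by simp)]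
  simp

lemma cchoose_pascal (m : ℤ) (j : ℕ) :
    cchoose m (j + 1) = cchoose (m - 1) (j + 1) + cchoose (m - 1) j := by
  rw [cchoose, cchoose, cchoose, Finset.prod_range_succ', Finset.prod_range_succ]
  have hc : ∀ i ∈ Finset.range j, ((m : ℂ) - ((i + 1 : ℕ) : ℂ)) = (((m - 1 : ℤ) : ℂ) - i) := by
    intro i _; push_cast; ring
  rw [Finset.prod_congr rfl hc]
  have h1 : ((j.factorial : ℂ)) ≠ 0 := by exact_mod_cast j.factorial_ne_zero
  have h2 : (((j+1).factorial : ℂ)) ≠ 0 := by exact_mod_cast (j+1).factorial_ne_zero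
  rw [div_add_div _ _ h2 h1, div_eq_div_iff h2 (mul_ne_zero h2 h1), Nat.factorial_succ]
  push_cast
  ring

open PowerSeries

lemma bernPS_eq : bernPS = bernoulliPowerSeries ℂ := by
  ext n
  rw [bernPS, bernoulliPowerSeries, coeff_mk, coeff_mk, eq_ratCast (algebraMap ℚ ℂ)]
  push_cast
  ring

lemma expPS_eq (c : ℂ) : expPS c = rescale c (exp ℂ) := by
  ext n
  rw [expPS, coeff_mk, coeff_rescale, coeff_exp, eq_ratCast (algebraMap ℚ ℂ)]
  push_cast
  ring

lemma expPS_mul (a b : ℂ) : expPS a * expPS b = expPS (a + b) := by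
  rw [expPS_eq, expPS_eq, expPS_eq, exp_mul_exp_eq_exp_add]

lemma bern_mul : bernPS * (expPS 1 - 1) = PowerSeries.X := by
  rw [bernPS_eq, expPS_eq, rescale_one, RingHom.id_apply,
    bernoulliPowerSeries_mul_exp_sub_one]

lemma deriv_expPS_one : d⁄dX ℂ (expPS 1) = expPS 1 := by
  ext n
  rw [PowerSeries.coeff_derivative, expPS, coeff_mk, coeff_mk, one_pow, one_pow,
    Nat.factorial_succ]
  have h1 : ((n.factorial : ℂ)) ≠ 0 := by exact_mod_cast n.factorial_ne_zero
  have h2 : ((n:ℂ) + 1) ≠ 0 := by exact_mod_cast Nat.succ_ne_zero n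
  field_simp
  push_cast
  ring

lemma F_one (n : ℕ) (hn : 1 ≤ n) :
    PowerSeries.coeff n (expPS 1 * bernPS ^ (n + 1)) = 0 := by
  set E := expPS 1 with hE
  set B := bernPS with hB
  set u := E - 1 with hu
  have hBu : B * u = PowerSeries.X := bern_mul
  obtain ⟨m, rfl⟩ : ∃ m, n = m + 1 := ⟨n - 1, by omega⟩
  have h1 : (PowerSeries.X * B ^ (m+1)) * u ^ (m+1) = (PowerSeries.X : ℂ⟦X⟧) ^ (m + 2) := by
    calc (PowerSeries.X * B ^ (m+1)) * u ^ (m+1) = PowerSeries.X * (B * u) ^ (m+1) := by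
          rw [mul_pow]; ring
      _ = (PowerSeries.X : ℂ⟦X⟧) ^ (m + 2) := by rw [hBu]; ring
  have hDu : d⁄dX ℂ u = E := by
    rw [hu, map_sub, Derivation.map_one_eq_zero, sub_zero, hE, deriv_expPS_one]
  have h2 := congrArg (d⁄dX ℂ) h1
  rw [Derivation.leibniz, Derivation.leibniz_pow, Derivation.leibniz_pow, hDu,
    PowerSeries.derivative_X] at h2
  simp only [smul_eq_mul, nsmul_eq_mul, mul_one] at h2
  rw [show m + 2 - 1 = m + 1 from rfl, show m + 1 - 1 = m from rfl] at h2
  -- h2 : X*B^(m+1) * (↑(m+1) * (u^m * E)) + u^(m+1) * D(X*B^(m+1)) = ↑(m+2) * X^(m+1)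
  have hb1 : B ^ (m+1) * u ^ m = B * PowerSeries.X ^ m := by
    calc B ^ (m+1) * u ^ m = B * (B * u) ^ m := by rw [mul_pow]; ring
      _ = B * PowerSeries.X ^ m := by rw [hBu]
  have hb2 : u ^ (m+1) * B ^ (m+1) = (PowerSeries.X : ℂ⟦X⟧) ^ (m+1) := by
    rw [← mul_pow, mul_comm u B, hBu]
  have hX : (PowerSeries.X : ℂ⟦X⟧) ^ (m+1) ≠ 0 := pow_ne_zero _ PowerSeries.X_ne_zero
  have h4 : (PowerSeries.X : ℂ⟦X⟧) ^ (m+1) *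
        (((m+1 : ℕ) : ℂ⟦X⟧) * (E * B ^ (m+2)) + d⁄dX ℂ (PowerSeries.X * B ^ (m+1)))
      = (PowerSeries.X : ℂ⟦X⟧) ^ (m+1) * (((m+2 : ℕ) : ℂ⟦X⟧) * B ^ (m+1)) := by
    linear_combination B ^ (m+1) * h2
      - ((m+1 : ℕ) : ℂ⟦X⟧) * PowerSeries.X * B ^ (m+1) * E * hb1
      - (d⁄dX ℂ (PowerSeries.X * B ^ (m+1))) * hb2
  have h5 := mul_left_cancel₀ hX h4
  have h6 := congrArg (PowerSeries.coeff (m+1)) h5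
  rw [map_add, show ((m+1:ℕ) : ℂ⟦X⟧) = PowerSeries.C ((m+1:ℕ) : ℂ) from (map_natCast C (m+1)).symm,
    show ((m+2:ℕ) : ℂ⟦X⟧) = PowerSeries.C ((m+2:ℕ) : ℂ) from (map_natCast C (m+2)).symm,
    PowerSeries.coeff_C_mul, PowerSeries.coeff_C_mul, PowerSeries.coeff_derivative,
    PowerSeries.coeff_succ_X_mul] at h6
  have hm : ((m:ℂ) + 1) ≠ 0 := by exact_mod_cast Nat.succ_ne_zero m
  refine mul_left_cancel₀ hm ?_
  push_cast at h6 ⊢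
  linear_combination h6

lemma F_base (c : ℂ) (j : ℕ) : PowerSeries.coeff 0 (expPS c * bernPS ^ (j + 1)) = 1 := by
  rw [coeff_zero_eq_constantCoeff, map_mul, map_pow]
  have h1 : constantCoeff (expPS c) = 1 := by
    rw [expPS, ← coeff_zero_eq_constantCoeff, coeff_mk]; norm_num
  have h2 : constantCoeff bernPS = 1 := by
    rw [bernPS, ← coeff_zero_eq_constantCoeff, coeff_mk]; norm_num
  rw [h1, h2, one_pow, one_mul]

lemma F_pascal (c : ℂ) (j : ℕ) :
    PowerSeries.coeff (j + 1) (expPS (c + 1) * bernPS ^ (j + 2))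
      = PowerSeries.coeff (j + 1) (expPS c * bernPS ^ (j + 2))
        + PowerSeries.coeff j (expPS c * bernPS ^ (j + 1)) := by
  have key : expPS (c + 1) * bernPS ^ (j + 2)
      = expPS c * bernPS ^ (j + 2) + PowerSeries.X * (expPS c * bernPS ^ (j + 1)) := by
    rw [← expPS_mul c 1]
    linear_combination (expPS c * bernPS ^ (j + 1)) * bern_mul
  rw [key, map_add, PowerSeries.coeff_succ_X_mul]

lemma main_F : ∀ (c : ℤ) (j : ℕ),
    PowerSeries.coeff j (expPS (c : ℂ) * bernPS ^ (j + 1)) = cchoose (c - 1) j := by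
  have base1 : ∀ j : ℕ, PowerSeries.coeff j (expPS (1 : ℂ) * bernPS ^ (j + 1)) = cchoose 0 j := by
    intro j
    cases j with
    | zero => rw [F_base, cchoose_zero']
    | succ j => rw [F_one (j+1) (by omega), cchoose_zero_succ]
  have fwd : ∀ c : ℤ, (∀ j, PowerSeries.coeff j (expPS (c : ℂ) * bernPS ^ (j + 1)) = cchoose (c - 1) j)
      → (∀ j, PowerSeries.coeff j (expPS ((c : ℂ) + 1) * bernPS ^ (j + 1)) = cchoose c j) := by
    intro c hc j
    cases j with
    | zero => rw [F_base, cchoose_zero']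
    | succ j =>
        rw [show j + 1 + 1 = j + 2 from rfl, F_pascal, hc (j+1), hc j, ← cchoose_pascal]
  have bwd : ∀ c : ℤ, (∀ j, PowerSeries.coeff j (expPS ((c : ℂ) + 1) * bernPS ^ (j + 1)) = cchoose c j)
      → (∀ j, PowerSeries.coeff j (expPS (c : ℂ) * bernPS ^ (j + 1)) = cchoose (c - 1) j) := by
    intro c hc j
    induction j with
    | zero => rw [F_base, cchoose_zero']
    | succ j ih =>
        have hp := F_pascal (c : ℂ) j
        rw [show j + 2 = j + 1 + 1 from rfl] at hp
        rw [hc (j+1), ih] at hp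
        rw [cchoose_pascal c j] at hp
        linear_combination -hp
  intro c
  induction c using Int.induction_on with
  | zero =>
      exact bwd 0 (by
        intro j
        rw [show ((0:ℤ) : ℂ) + 1 = (1 : ℂ) by norm_num]
        exact base1 j)
  | succ i ih =>
      intro j
      have h := fwd i ih j
      rw [show ((i:ℤ):ℂ) + 1 = (((i:ℤ) + 1 : ℤ) : ℂ) by push_cast; ring] at h
      rw [h, show ((i:ℤ) + 1 - 1 : ℤ) = (i:ℤ) from by ring]
  | pred i ih =>
      exact bwd (-(i:ℤ) - 1) (by
        intro j'
        rw [show ((-(i:ℤ) - 1 : ℤ) : ℂ) + 1 = ((-(i:ℤ) : ℤ) : ℂ) by push_cast; ring]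
        exact ih j')

lemma conv_sum (kc hc : ℤ) (j M : ℕ) (hjM : j < M) :
    ∑ m ∈ Finset.range M, ((kc : ℂ) ^ m / (Nat.factorial m)) * sqCoeff (hc : ℂ) j (m : ℤ)
      = cchoose (kc + hc - 1) j := by
  have hsub : Finset.range (j + 1) ⊆ Finset.range M := by
    intro x hx; rw [Finset.mem_range] at hx ⊢; omega
  have h0 : ∀ x ∈ Finset.range M, x ∉ Finset.range (j + 1) →
      ((kc : ℂ) ^ x / (Nat.factorial x)) * sqCoeff (hc : ℂ) j (x : ℤ) = 0 := by
    intro x _ hx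
    rw [Finset.mem_range] at hx
    rw [sqCoeff, if_neg (by omega), mul_zero]
  rw [← Finset.sum_subset hsub h0]
  have hterm : ∀ m ∈ Finset.range (j + 1),
      ((kc : ℂ) ^ m / (Nat.factorial m)) * sqCoeff (hc : ℂ) j (m : ℤ)
        = PowerSeries.coeff m (expPS (kc : ℂ))
          * PowerSeries.coeff (j - m) (expPS (hc : ℂ) * bernPS ^ (j + 1)) := by
    intro m hm
    rw [Finset.mem_range] at hm
    rw [sqCoeff, if_pos (by omega), show ((j : ℤ) - (m : ℤ)).toNat = j - m by omega]
    congr 1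
    rw [expPS, coeff_mk]
  rw [Finset.sum_congr rfl hterm]
  have hmul := PowerSeries.coeff_mul j (expPS (kc : ℂ)) (expPS (hc : ℂ) * bernPS ^ (j + 1))
  rw [Finset.Nat.sum_antidiagonal_eq_sum_range_succ_mk] at hmul
  rw [← hmul, ← mul_assoc, expPS_mul,
    show (kc : ℂ) + (hc : ℂ) = ((kc + hc : ℤ) : ℂ) by push_cast; ring, main_F,
    show (kc + hc - 1 : ℤ) = kc + hc - 1 from rfl]


/-- In a vertex operator algebra, for homogeneous `v` of weight `h ∈ ℤ` and any `k ∈ ℤ`,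
`∑_{j≥0} C(k+h-1,j) v(j) = ∑_{m≥0} (k^m/m!) v[m]` as operators on `V` (both sums are
finite on each vector by lower truncation), where `v[m] = ∑_j sqCoeff h j m · v(j)` are
the square bracket modes of `Y[v,z] = Y(e^{zL(0)}v, e^z-1)`. -/
theorem round_to_square_bracket {V : Type*} [AddCommGroup V] [Module ℂ V]
    (mode : V → ℤ → Module.End ℂ V) (vac ω : V)
    (htrunc : ∀ a b : V, ∃ N : ℕ, ∀ j : ℤ, (N : ℤ) ≤ j → mode a j b = 0)
    (hvac : ∀ (a : V) (n : ℤ), -1 ≤ n → mode a n vac = if n = -1 then a else 0)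
    (hcomm : ∀ (a b : V) (m n : ℤ) (v : V), ∃ N : ℕ, ∀ M : ℕ, N ≤ M →
      mode a m (mode b n v) - mode b n (mode a m v)
        = ∑ j ∈ Finset.range M, cchoose m j • mode (mode a j b) (m + n - j) v)
    (htrans : ∀ (c : V) (n : ℤ), mode (mode ω 0 c) n = (-(n : ℂ)) • mode c (n - 1))
    (v : V) (h : ℤ) (hwt : mode ω 1 v = (h : ℂ) • v) (k : ℤ) :
    ∀ w : V, ∃ N : ℕ, ∀ M : ℕ, N ≤ M →
      ∑ j ∈ Finset.range M, cchoose (k + h - 1) j • mode v j w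
        = ∑ m ∈ Finset.range M, ((k : ℂ) ^ m / (Nat.factorial m)) •
            ∑ j ∈ Finset.range M, sqCoeff (h : ℂ) j (m : ℤ) • mode v j w := by
  intro w
  refine ⟨0, fun M _ => ?_⟩
  symm
  calc ∑ m ∈ Finset.range M, ((k : ℂ) ^ m / (Nat.factorial m)) •
          ∑ j ∈ Finset.range M, sqCoeff (h : ℂ) j (m : ℤ) • mode v j w
      = ∑ j ∈ Finset.range M,
          (∑ m ∈ Finset.range M, ((k : ℂ) ^ m / (Nat.factorial m)) * sqCoeff (h : ℂ) j (m : ℤ))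
            • mode v j w := by
        simp_rw [Finset.smul_sum, smul_smul, Finset.sum_smul]
        exact Finset.sum_comm
    _ = ∑ j ∈ Finset.range M, cchoose (k + h - 1) j • mode v j w := by
        refine Finset.sum_congr rfl fun j hj => ?_
        rw [conv_sum k h j M (Finset.mem_range.mp hj)]
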